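/- arXiv:2509.05229 — 2 statements merged into one kernel-verified Lean document; each statement's English description precedes it below -/
import Mathlib

section
/- Let 0 < θ < π, 1 ≤ α < 2, and θ_0 ∈ (π/2, (π-θ)/α). For λ = r e^{-iθ_0} with r ≥ ρ > 0 and z with arg z = θ, one has |λ^α + z| ≥ cos((θ + αθ_0)/2)·(ρ^α + |z|), provided (θ + αθ_0)/2 < π/2. -/
open Real

lemma key_abs (a b φ₁ φ₂ : ℝ) (ha : 0 ≤ a) (hb : 0 ≤ b)
    (hc : 0 ≤ Real.cos ((φ₂ - φ₁) / 2)) :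
    Real.cos ((φ₂ - φ₁) / 2) * (a + b)
      ≤ ‖(a : ℂ) * Complex.exp ((φ₁ : ℂ) * Complex.I)
          + (b : ℂ) * Complex.exp ((φ₂ : ℂ) * Complex.I)‖ := by
  set c := Real.cos ((φ₂ - φ₁) / 2) with hcdef
  have hcos : Real.cos (φ₂ - φ₁) = 2 * c ^ 2 - 1 := by
    have h := Real.cos_two_mul ((φ₂ - φ₁) / 2)
    rw [show 2 * ((φ₂ - φ₁) / 2) = φ₂ - φ₁ by ring] at h
    rw [hcdef]; linarith [h]
  have hw : ‖(a : ℂ) * Complex.exp ((φ₁ : ℂ) * Complex.I)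
          + (b : ℂ) * Complex.exp ((φ₂ : ℂ) * Complex.I)‖ ^ 2
      = a ^ 2 + b ^ 2 + 2 * a * b * Real.cos (φ₂ - φ₁) := by
    rw [Complex.sq_norm, Complex.normSq_apply]
    simp [Complex.exp_mul_I, Real.cos_sub, Complex.cos_ofReal_re, Complex.sin_ofReal_re]
    nlinarith [Real.sin_sq_add_cos_sq φ₁, Real.sin_sq_add_cos_sq φ₂]
  have h1 : c ^ 2 ≤ 1 := by
    have h2 := Real.neg_one_le_cos ((φ₂ - φ₁) / 2)
    have h3 := Real.cos_le_one ((φ₂ - φ₁) / 2)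
    nlinarith
  have hsq : (c * (a + b)) ^ 2 ≤ a ^ 2 + b ^ 2 + 2 * a * b * Real.cos (φ₂ - φ₁) := by
    rw [hcos]; nlinarith [sq_nonneg (a - b), mul_nonneg ha hb]
  have habs : 0 ≤ ‖(a : ℂ) * Complex.exp ((φ₁ : ℂ) * Complex.I)
          + (b : ℂ) * Complex.exp ((φ₂ : ℂ) * Complex.I)‖ := norm_nonneg _
  nlinarith [hw, hsq, mul_nonneg hc (add_nonneg ha hb)]

theorem sector_lower_bound (θ α θ₀ ρ r : ℝ) (z lam : ℂ)
    (hθ : 0 < θ) (hθπ : θ < π) (hα1 : 1 ≤ α) (hα2 : α < 2)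
    (hθ₀ : θ₀ ∈ Set.Ioo (π / 2) ((π - θ) / α))
    (hρ : 0 < ρ) (hr : ρ ≤ r)
    (hlam : lam = (r : ℂ) * Complex.exp (-(θ₀ : ℂ) * Complex.I))
    (hz : z.arg = θ)
    (hhalf : (θ + α * θ₀) / 2 < π / 2) :
    Real.cos ((θ + α * θ₀) / 2) * (ρ ^ α + ‖z‖)
      ≤ ‖lam ^ (α : ℂ) + z‖ := by
  obtain ⟨hθ₀1, hθ₀2⟩ := hθ₀
  have hπ := Real.pi_pos
  have hαpos : 0 < α := lt_of_lt_of_le one_pos hα1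
  have hθ₀pos : 0 < θ₀ := lt_trans (by linarith) hθ₀1
  have hαθ₀ : α * θ₀ < π - θ := by
    have := (lt_div_iff₀ hαpos).mp hθ₀2
    linarith [this]
  have hθ₀π : θ₀ < π := by nlinarith
  have hrpos : 0 < r := lt_of_lt_of_le hρ hr
  have hexp : (-(θ₀ : ℂ) * Complex.I) = ((-θ₀ : ℝ) : ℂ) * Complex.I := by push_cast; ring
  have habs_lam : ‖lam‖ = r := by
    rw [hlam, norm_mul, Complex.norm_exp]
    simp [abs_of_pos hrpos]
  have harg_lam : lam.arg = -θ₀ := by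
    rw [hlam, hexp, Complex.exp_mul_I]
    have hmem : (-θ₀) ∈ Set.Ioc (-π) π := ⟨by linarith, by linarith⟩
    exact Complex.arg_mul_cos_add_sin_mul_I hrpos hmem
  have hlam_ne : lam ≠ 0 := by
    rw [hlam]
    exact mul_ne_zero (Complex.ofReal_ne_zero.mpr hrpos.ne') (Complex.exp_ne_zero _)
  have hlog : Complex.log lam = ((Real.log r : ℝ) : ℂ) + ((-θ₀ : ℝ) : ℂ) * Complex.I := by
    rw [Complex.log, habs_lam, harg_lam]
  have hcpow : lam ^ (α : ℂ)
      = ((r ^ α : ℝ) : ℂ) * Complex.exp (((-(α * θ₀) : ℝ) : ℂ) * Complex.I) := by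
    rw [Complex.cpow_def_of_ne_zero hlam_ne, hlog]
    rw [Real.rpow_def_of_pos hrpos]
    rw [show (((Real.log r : ℝ) : ℂ) + ((-θ₀ : ℝ) : ℂ) * Complex.I) * (α : ℂ)
        = ((Real.log r * α : ℝ) : ℂ) + ((-(α * θ₀) : ℝ) : ℂ) * Complex.I by push_cast; ring]
    rw [Complex.exp_add, Complex.ofReal_exp]
  have hzeq : z = ((‖z‖ : ℝ) : ℂ) * Complex.exp ((θ : ℂ) * Complex.I) := by
    rw [← hz]
    exact (Complex.norm_mul_exp_arg_mul_I z).symm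
  have hangle : (θ - (-(α * θ₀))) / 2 = (θ + α * θ₀) / 2 := by ring
  have hc0 : 0 ≤ Real.cos ((θ + α * θ₀) / 2) := by
    apply Real.cos_nonneg_of_mem_Icc
    constructor
    · nlinarith
    · linarith
  have hra : ρ ^ α ≤ r ^ α := Real.rpow_le_rpow (le_of_lt hρ) hr (le_of_lt hαpos)
  have key := key_abs (r ^ α) (‖z‖) (-(α * θ₀)) θ
    (Real.rpow_nonneg (le_of_lt hrpos) α) (norm_nonneg z)
    (by rw [hangle]; exact hc0)
  rw [hangle] at key
  calc Real.cos ((θ + α * θ₀) / 2) * (ρ ^ α + ‖z‖)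
      ≤ Real.cos ((θ + α * θ₀) / 2) * (r ^ α + ‖z‖) := by
        apply mul_le_mul_of_nonneg_left _ hc0; linarith
    _ ≤ ‖lam ^ (α : ℂ) + z‖ := by
        rw [hcpow]
        have heq : ((r ^ α : ℝ) : ℂ) * Complex.exp (((-(α * θ₀) : ℝ) : ℂ) * Complex.I) + z
            = ((r ^ α : ℝ) : ℂ) * Complex.exp (((-(α * θ₀) : ℝ) : ℂ) * Complex.I)
              + ((‖z‖ : ℝ) : ℂ) * Complex.exp ((θ : ℂ) * Complex.I) := by
          rw [← hzeq]
        rw [heq]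
        exact key
end

section
/- Let -1 < γ < 0, α ∈ (0,2), and t > 0. Then for N_0 = t^{-α}, the quantity ∫_0^{N_0} r^{1+γ}/(1 + t^α r) dr + ∫_{N_0}^∞ r^{1+γ}/(1 + t^{2α} r²) dr is finite and bounded by C · t^{-2α - αγ} for a constant C depending only on γ and α. -/
open Real MeasureTheory

theorem split_integral_bound (γ α : ℝ) (hγ₁ : -1 < γ) (hγ₂ : γ < 0)
    (hα : α ∈ Set.Ioo (0:ℝ) 2) :
    ∃ C > 0, ∀ t : ℝ, 0 < t →
      IntervalIntegrable (fun r : ℝ => r ^ (1 + γ) / (1 + t ^ α * r)) volume 0 (t ^ (-α)) ∧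
      IntegrableOn (fun r : ℝ => r ^ (1 + γ) / (1 + t ^ (2 * α) * r ^ 2))
        (Set.Ioi (t ^ (-α))) ∧
      (∫ r in (0:ℝ)..(t ^ (-α)), r ^ (1 + γ) / (1 + t ^ α * r))
        + (∫ r in Set.Ioi (t ^ (-α)), r ^ (1 + γ) / (1 + t ^ (2 * α) * r ^ 2))
        ≤ C * t ^ (-(2 * α) - α * γ) := by
  obtain ⟨hα₀, hα₂⟩ := hα
  have h2γ : (0:ℝ) < 2 + γ := by linarith
  have hnγ : (0:ℝ) < -γ := by linarith
  refine ⟨1 / (2 + γ) + 1 / (-γ), add_pos (div_pos one_pos h2γ) (div_pos one_pos hnγ), fun t ht => ?_⟩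
  set N : ℝ := t ^ (-α) with hN
  have hNpos : 0 < N := Real.rpow_pos_of_pos ht _
  have h1γ : (-1:ℝ) < 1 + γ := by linarith
  -- measurability
  have hmeas1 : AEStronglyMeasurable (fun r : ℝ => r ^ (1 + γ) / (1 + t ^ α * r))
      (volume.restrict (Set.uIoc (0:ℝ) N)) := by
    apply Measurable.aestronglyMeasurable
    exact (Real.continuous_rpow_const (by linarith)).measurable.div
      (measurable_const.add (measurable_const.mul measurable_id))
  have hmeas2 : AEStronglyMeasurable (fun r : ℝ => r ^ (1 + γ) / (1 + t ^ (2 * α) * r ^ 2))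
      (volume.restrict (Set.Ioi N)) := by
    apply Measurable.aestronglyMeasurable
    exact (Real.continuous_rpow_const (by linarith)).measurable.div
      (measurable_const.add (measurable_const.mul (measurable_id.pow_const 2)))
  -- pointwise bounds
  have hb1 : ∀ r : ℝ, 0 ≤ r → r ^ (1 + γ) / (1 + t ^ α * r) ≤ r ^ (1 + γ) := by
    intro r hr
    have hden : (1:ℝ) ≤ 1 + t ^ α * r := by
      have : 0 ≤ t ^ α * r := mul_nonneg (Real.rpow_nonneg ht.le _) hr
      linarith
    exact div_le_self (Real.rpow_nonneg hr _) hden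
  have hb2 : ∀ r : ℝ, r ∈ Set.Ioi N →
      r ^ (1 + γ) / (1 + t ^ (2 * α) * r ^ 2) ≤ t ^ (-(2 * α)) * r ^ (γ - 1) := by
    intro r hr
    have hrpos : 0 < r := hNpos.trans hr
    have htα : 0 < t ^ (2 * α) := Real.rpow_pos_of_pos ht _
    have hden : t ^ (2 * α) * r ^ 2 ≤ 1 + t ^ (2 * α) * r ^ 2 := by nlinarith
    have hdenpos : 0 < t ^ (2 * α) * r ^ 2 := by positivity
    calc r ^ (1 + γ) / (1 + t ^ (2 * α) * r ^ 2)
        ≤ r ^ (1 + γ) / (t ^ (2 * α) * r ^ 2) :=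
          div_le_div_of_nonneg_left (Real.rpow_nonneg hrpos.le _) hdenpos hden
      _ = t ^ (-(2 * α)) * r ^ (γ - 1) := by
          have hr2 : r ^ (1 + γ) / r ^ 2 = r ^ (γ - 1) := by
            rw [← Real.rpow_natCast r 2, ← Real.rpow_sub hrpos]
            norm_num
            congr 1
            ring
          rw [Real.rpow_neg ht.le, ← hr2]
          ring
  -- first integrability
  have hI1 : IntervalIntegrable (fun r : ℝ => r ^ (1 + γ) / (1 + t ^ α * r)) volume 0 N := by
    apply IntervalIntegrable.mono_fun (intervalIntegral.intervalIntegrable_rpow' h1γ) hmeas1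
    rw [Set.uIoc_of_le hNpos.le]
    filter_upwards [ae_restrict_mem measurableSet_Ioc] with r hr
    have hr0 : 0 ≤ r := hr.1.le
    rw [Real.norm_eq_abs, Real.norm_eq_abs,
      abs_of_nonneg (by positivity : (0:ℝ) ≤ r ^ (1 + γ) / (1 + t ^ α * r)),
      abs_of_nonneg (Real.rpow_nonneg hr0 _)]
    exact hb1 r hr0
  -- second integrability
  have hI2base : IntegrableOn (fun r : ℝ => t ^ (-(2 * α)) * r ^ (γ - 1)) (Set.Ioi N) :=
    (integrableOn_Ioi_rpow_of_lt (by linarith) hNpos).const_mul _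
  have hI2 : IntegrableOn (fun r : ℝ => r ^ (1 + γ) / (1 + t ^ (2 * α) * r ^ 2))
      (Set.Ioi N) := by
    apply hI2base.mono' hmeas2
    filter_upwards [ae_restrict_mem measurableSet_Ioi] with r hr
    have hrpos : 0 < r := hNpos.trans hr
    rw [Real.norm_eq_abs, abs_of_nonneg (by positivity)]
    exact hb2 r hr
  refine ⟨hI1, hI2, ?_⟩
  -- integral bounds
  have hE1 : (∫ r in (0:ℝ)..N, r ^ (1 + γ) / (1 + t ^ α * r)) ≤ N ^ (2 + γ) / (2 + γ) := by
    have := intervalIntegral.integral_mono_on hNpos.le hI1 (intervalIntegral.intervalIntegrable_rpow' h1γ)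
      (fun r hr => hb1 r hr.1)
    calc (∫ r in (0:ℝ)..N, r ^ (1 + γ) / (1 + t ^ α * r))
        ≤ ∫ r in (0:ℝ)..N, r ^ (1 + γ) := this
      _ = N ^ (2 + γ) / (2 + γ) := by
          rw [integral_rpow (Or.inl h1γ), Real.zero_rpow (by intro h; linarith : 1 + γ + 1 ≠ 0),
            show 1 + γ + 1 = 2 + γ by ring]
          ring
  have hE2 : (∫ r in Set.Ioi N, r ^ (1 + γ) / (1 + t ^ (2 * α) * r ^ 2))
      ≤ t ^ (-(2 * α)) * (N ^ γ / (-γ)) := by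
    have hmono := setIntegral_mono_on hI2 hI2base measurableSet_Ioi hb2
    calc (∫ r in Set.Ioi N, r ^ (1 + γ) / (1 + t ^ (2 * α) * r ^ 2))
        ≤ ∫ r in Set.Ioi N, t ^ (-(2 * α)) * r ^ (γ - 1) := hmono
      _ = t ^ (-(2 * α)) * (N ^ γ / (-γ)) := by
          rw [integral_const_mul, integral_Ioi_rpow_of_lt (by linarith) hNpos]
          ring_nf
  -- combine
  have hNrw : N ^ (2 + γ) = t ^ (-(2 * α) - α * γ) := by
    rw [hN, ← Real.rpow_mul ht.le]
    congr 1; ring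
  have hNrw2 : t ^ (-(2 * α)) * N ^ γ = t ^ (-(2 * α) - α * γ) := by
    rw [hN, ← Real.rpow_mul ht.le, ← Real.rpow_add ht]
    congr 1; ring
  have := add_le_add hE1 hE2
  calc (∫ r in (0:ℝ)..N, r ^ (1 + γ) / (1 + t ^ α * r))
        + (∫ r in Set.Ioi N, r ^ (1 + γ) / (1 + t ^ (2 * α) * r ^ 2))
      ≤ N ^ (2 + γ) / (2 + γ) + t ^ (-(2 * α)) * (N ^ γ / (-γ)) := this
    _ = (1 / (2 + γ) + 1 / (-γ)) * t ^ (-(2 * α) - α * γ) := by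
        rw [mul_div_assoc'] at *
        rw [hNrw2] at *
        rw [hNrw]
        field_simp
end
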